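/- Let D = (E, 𝓕) be a set system with 𝓕 nonempty, let A ⊆ E, and let X be a separator of D. Then X is a separator of the twist D*A and X is a separator of the loop complementation D+A. -/

import Mathlib

noncomputable section
open scoped Classical symmDiff

/-- A set system: a finite ground set `E` together with a collection `Fs` of subsets of
`E`, the feasible sets. -/
structure SetSystem (α : Type*) where
  E : Finset α
  Fs : Set (Finset α)

namespace SetSystem

variable {α : Type*} [DecidableEq α]

/-- A delta-matroid: a set system whose nonempty collection of feasible sets (subsets of
the ground set) satisfies the symmetric exchange axiom. -/
def IsDeltaMatroid (D : SetSystem α) : Prop :=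
  D.Fs.Nonempty ∧ (∀ F ∈ D.Fs, F ⊆ D.E) ∧
    ∀ F₁ ∈ D.Fs, ∀ F₂ ∈ D.Fs, ∀ x ∈ F₁ ∆ F₂, ∃ y ∈ F₁ ∆ F₂, F₁ ∆ ({x, y} : Finset α) ∈ D.Fs

/-- A delta-matroid is even if all its feasible sets have the same parity of size. -/
def IsEven (D : SetSystem α) : Prop :=
  ∀ F₁ ∈ D.Fs, ∀ F₂ ∈ D.Fs, F₁.card % 2 = F₂.card % 2

/-- `e` is a coloop: it belongs to every feasible set. -/
def IsColoop (D : SetSystem α) (e : α) : Prop := ∀ F ∈ D.Fs, e ∈ F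

/-- `e` is a loop: it belongs to no feasible set. -/
def IsLoop (D : SetSystem α) (e : α) : Prop := ∀ F ∈ D.Fs, e ∉ F

/-- The underlying deletion operation: keep the feasible sets avoiding `e`. -/
def del₀ (D : SetSystem α) (e : α) : SetSystem α :=
  ⟨D.E.erase e, {F | F ∈ D.Fs ∧ e ∉ F}⟩

/-- The underlying contraction operation: remove `e` from the feasible sets containing it. -/
def con₀ (D : SetSystem α) (e : α) : SetSystem α :=
  ⟨D.E.erase e, {F | ∃ G ∈ D.Fs, e ∈ G ∧ F = G.erase e}⟩

/-- Deletion `D∖e`: `del₀` if `e` is not a coloop, and `con₀` (= `D/e`) if `e` is a coloop. -/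
def delete (D : SetSystem α) (e : α) : SetSystem α :=
  if D.IsColoop e then D.con₀ e else D.del₀ e

/-- Contraction `D/e`: `con₀` if `e` is not a loop, and `del₀` (= `D∖e`) if `e` is a loop. -/
def contract (D : SetSystem α) (e : α) : SetSystem α :=
  if D.IsLoop e then D.del₀ e else D.con₀ e

/-- The twist `D*A`: replace each feasible set `F` by `F ∆ A`. -/
def twist (D : SetSystem α) (A : Finset α) : SetSystem α :=
  ⟨D.E, {F | ∃ G ∈ D.Fs, F = G ∆ A}⟩

/-- Loop complementation `D+e`. -/
def lcomp (D : SetSystem α) (e : α) : SetSystem α :=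
  ⟨D.E, D.Fs ∆ {F | ∃ G ∈ D.Fs, e ∉ G ∧ F = G ∪ {e}}⟩

/-- Loop complementation `D+A` by a set `A = {a₁, …, aₙ}`, defined as the iterated
single-element loop complementation `D+a₁+⋯+aₙ` (the result is order-independent). -/
def lcompSet (D : SetSystem α) (A : Finset α) : SetSystem α :=
  A.toList.foldl lcomp D

/-- The operation `D ∗̄ A = D+A*A+A`. -/
def starBar (D : SetSystem α) (A : Finset α) : SetSystem α :=
  ((D.lcompSet A).twist A).lcompSet A

/-- The direct sum of two set systems. -/
def directSum (D₁ D₂ : SetSystem α) : SetSystem α :=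
  ⟨D₁.E ∪ D₂.E, {F | ∃ F₁ ∈ D₁.Fs, ∃ F₂ ∈ D₂.Fs, F = F₁ ∪ F₂}⟩

/-- `X` is a separator of `D`: `D = D₁ ⊕ D₂` for set systems `D₁`, `D₂` with ground sets
`X` and `E − X`. -/
def IsSeparator (D : SetSystem α) (X : Finset α) : Prop :=
  X ⊆ D.E ∧ ∃ D₁ D₂ : SetSystem α, D₁.E = X ∧ D₂.E = D.E \ X ∧
    (∀ F ∈ D₁.Fs, F ⊆ D₁.E) ∧ (∀ F ∈ D₂.Fs, F ⊆ D₂.E) ∧ D = D₁.directSum D₂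

/-- `D` is connected: it has no proper separator. -/
def Connected (D : SetSystem α) : Prop :=
  ¬ ∃ X, D.IsSeparator X ∧ X.Nonempty ∧ X ≠ D.E

/-- `D'` is a minor of `D`: it is obtained from `D` by a sequence of single-element
deletions and contractions. -/
inductive MinorOf : SetSystem α → SetSystem α → Prop
  | refl (D : SetSystem α) : MinorOf D D
  | del {D' D : SetSystem α} (e : α) : MinorOf D' D → e ∈ D'.E → MinorOf (D'.delete e) D
  | con {D' D : SetSystem α} (e : α) : MinorOf D' D → e ∈ D'.E → MinorOf (D'.contract e) D

/-- `D'` is a 3-minor of `D`: it is obtained from `D` by a sequence of single-element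
deletions, contractions and twist-contractions `D ↦ (D+e)/e`. -/
inductive Minor3Of : SetSystem α → SetSystem α → Prop
  | refl (D : SetSystem α) : Minor3Of D D
  | del {D' D : SetSystem α} (e : α) : Minor3Of D' D → e ∈ D'.E → Minor3Of (D'.delete e) D
  | con {D' D : SetSystem α} (e : α) : Minor3Of D' D → e ∈ D'.E → Minor3Of (D'.contract e) D
  | tcon {D' D : SetSystem α} (e : α) : Minor3Of D' D → e ∈ D'.E →
      Minor3Of ((D'.lcomp e).contract e) D

/-- `D` is vf-safe: every set system obtained from `D` by a sequence of twists by single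
elements and loop complementations is a delta-matroid. -/
inductive TwistLcompReach : SetSystem α → SetSystem α → Prop
  | refl (D : SetSystem α) : TwistLcompReach D D
  | twist {D' D : SetSystem α} (e : α) : TwistLcompReach D' D → e ∈ D'.E →
      TwistLcompReach (D'.twist {e}) D
  | lcomp {D' D : SetSystem α} (e : α) : TwistLcompReach D' D → e ∈ D'.E →
      TwistLcompReach (D'.lcomp e) D

/-- A vf-safe delta-matroid. -/
def IsVfSafe (D : SetSystem α) : Prop :=
  ∀ D' : SetSystem α, TwistLcompReach D' D → D'.IsDeltaMatroid

end SetSystem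

namespace MyAux
open SetSystem

variable {α : Type*} [DecidableEq α]

lemma setSystem_ext' {D D' : SetSystem α} (hE : D.E = D'.E) (hF : D.Fs = D'.Fs) : D = D' := by
  cases D; cases D'; cases hE; cases hF; rfl

lemma inter_union_sdiff'' (s t : Finset α) : s ∩ t ∪ s \ t = s := by
  ext x; simp only [Finset.mem_union, Finset.mem_inter, Finset.mem_sdiff]; tauto

lemma mem_dsum {D₁ D₂ : SetSystem α} {X : Finset α}
    (h1 : ∀ F ∈ D₁.Fs, F ⊆ X) (h2 : ∀ F ∈ D₂.Fs, Disjoint F X) (H : Finset α) :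
    H ∈ (D₁.directSum D₂).Fs ↔ H ∩ X ∈ D₁.Fs ∧ H \ X ∈ D₂.Fs := by
  constructor
  · rintro ⟨F₁, hF₁, F₂, hF₂, rfl⟩
    have e1 : (F₁ ∪ F₂) ∩ X = F₁ := by
      ext x
      simp only [Finset.mem_inter, Finset.mem_union]
      constructor
      · rintro ⟨h | h, hx⟩
        · exact h
        · exact absurd hx (Finset.disjoint_left.mp (h2 F₂ hF₂) h)
      · intro h; exact ⟨Or.inl h, h1 F₁ hF₁ h⟩
    have e2 : (F₁ ∪ F₂) \ X = F₂ := by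
      ext x
      simp only [Finset.mem_sdiff, Finset.mem_union]
      constructor
      · rintro ⟨h | h, hx⟩
        · exact absurd (h1 F₁ hF₁ h) hx
        · exact h
      · intro h; exact ⟨Or.inr h, Finset.disjoint_left.mp (h2 F₂ hF₂) h⟩
    rw [e1, e2]; exact ⟨hF₁, hF₂⟩
  · rintro ⟨hA, hB⟩
    exact ⟨_, hA, _, hB, (inter_union_sdiff'' H X).symm⟩

lemma inter_symmDiff (s t u : Finset α) : (s ∆ t) ∩ u = (s ∩ u) ∆ (t ∩ u) := by
  ext x; simp only [Finset.mem_inter, Finset.mem_symmDiff]; tauto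

lemma sdiff_symmDiff' (s t u : Finset α) : (s ∆ t) \ u = (s \ u) ∆ (t \ u) := by
  ext x; simp only [Finset.mem_sdiff, Finset.mem_symmDiff]; tauto

lemma union_symmDiff_split (G₁ G₂ A X : Finset α) (h1 : G₁ ⊆ X) (h2 : Disjoint G₂ X) :
    (G₁ ∪ G₂) ∆ A = (G₁ ∆ (A ∩ X)) ∪ (G₂ ∆ (A \ X)) := by
  ext x
  have hx1 : x ∈ G₁ → x ∈ X := fun h => h1 h
  have hx2 : x ∈ G₂ → x ∉ X := fun h => Finset.disjoint_left.mp h2 h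
  by_cases hx : x ∈ X <;>
    simp only [Finset.mem_symmDiff, Finset.mem_union, Finset.mem_inter, Finset.mem_sdiff] <;>
    tauto

lemma mem_lcomp {D : SetSystem α} {e : α} {H : Finset α} :
    H ∈ (D.lcomp e).Fs ↔
      (H ∈ D.Fs ∧ ¬(e ∈ H ∧ H.erase e ∈ D.Fs)) ∨ ((e ∈ H ∧ H.erase e ∈ D.Fs) ∧ H ∉ D.Fs) := by
  have hT : ∀ S : Set (Finset α),
      (H ∈ {F | ∃ G ∈ S, e ∉ G ∧ F = G ∪ {e}} ↔ e ∈ H ∧ H.erase e ∈ S) := by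
    intro S
    constructor
    · rintro ⟨G, hG, heG, rfl⟩
      refine ⟨Finset.mem_union_right _ (Finset.mem_singleton_self e), ?_⟩
      have : (G ∪ {e}).erase e = G := by
        ext x
        simp only [Finset.mem_erase, Finset.mem_union, Finset.mem_singleton]
        constructor
        · rintro ⟨hne, h | h⟩
          · exact h
          · exact absurd h hne
        · intro h; exact ⟨fun hx => heG (hx ▸ h), Or.inl h⟩
      rw [this]; exact hG
    · rintro ⟨he, hG⟩
      exact ⟨H.erase e, hG, Finset.notMem_erase e H,
        by
          ext x
          simp only [Finset.mem_union, Finset.mem_erase, Finset.mem_singleton]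
          constructor
          · intro hx; by_cases hxe : x = e
            · exact Or.inr hxe
            · exact Or.inl ⟨hxe, hx⟩
          · rintro (⟨_, hx⟩ | rfl)
            · exact hx
            · exact he⟩
  rw [show (D.lcomp e).Fs = D.Fs ∆ {F | ∃ G ∈ D.Fs, e ∉ G ∧ F = G ∪ {e}} from rfl,
    Set.mem_symmDiff, hT]

lemma lcomp_sep (D : SetSystem α) (X : Finset α) (hX : D.IsSeparator X) (e : α)
    (he : e ∈ D.E) : (D.lcomp e).IsSeparator X := by
  obtain ⟨hXE, D₁, D₂, hE1, hE2, h1, h2, hD⟩ := hX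
  subst hD
  have h1X : ∀ F ∈ D₁.Fs, F ⊆ X := fun F hF => hE1 ▸ h1 F hF
  have h2' : ∀ F ∈ D₂.Fs, Disjoint F X := by
    intro F hF
    rw [Finset.disjoint_left]
    intro x hx
    have hh := h2 F hF hx
    rw [hE2] at hh
    exact (Finset.mem_sdiff.mp hh).2
  by_cases heX : e ∈ X
  · have hb : ∀ F ∈ (D₁.lcomp e).Fs, F ⊆ X := by
      intro F hF
      rcases mem_lcomp.mp hF with ⟨hF1, _⟩ | ⟨⟨heF, hF1⟩, _⟩
      · exact h1X F hF1
      · intro x hx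
        by_cases hxe : x = e
        · exact hxe ▸ heX
        · exact h1X _ hF1 (Finset.mem_erase.mpr ⟨hxe, hx⟩)
    refine ⟨hXE, D₁.lcomp e, D₂, hE1, hE2, fun F hF => hE1 ▸ hb F hF, h2, ?_⟩
    apply setSystem_ext'
    · rfl
    ext H
    have f1 : H.erase e ∩ X = (H ∩ X).erase e := by
      ext x; simp only [Finset.mem_inter, Finset.mem_erase]; tauto
    have f2 : H.erase e \ X = H \ X := by
      ext x
      simp only [Finset.mem_sdiff, Finset.mem_erase]
      constructor
      · tauto
      · rintro ⟨hx, hxX⟩; exact ⟨⟨fun h => hxX (h ▸ heX), hx⟩, hxX⟩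
    have f3 : e ∈ H ↔ e ∈ H ∩ X := by simp [heX]
    simp only [mem_lcomp, mem_dsum h1X h2', mem_dsum hb h2', f1, f2]
    tauto
  · have heD2 : e ∈ D₂.E := by
      rw [hE2]; exact Finset.mem_sdiff.mpr ⟨he, heX⟩
    have hb : ∀ F ∈ (D₂.lcomp e).Fs, Disjoint F X := by
      intro F hF
      rcases mem_lcomp.mp hF with ⟨hF1, _⟩ | ⟨⟨heF, hF1⟩, _⟩
      · exact h2' F hF1
      · rw [Finset.disjoint_left]
        intro x hx hxX
        by_cases hxe : x = e
        · exact heX (hxe ▸ hxX)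
        · exact Finset.disjoint_left.mp (h2' _ hF1) (Finset.mem_erase.mpr ⟨hxe, hx⟩) hxX
    have hb' : ∀ F ∈ (D₂.lcomp e).Fs, F ⊆ D₂.E := by
      intro F hF
      rcases mem_lcomp.mp hF with ⟨hF1, _⟩ | ⟨⟨heF, hF1⟩, _⟩
      · exact h2 F hF1
      · intro x hx
        by_cases hxe : x = e
        · exact hxe ▸ heD2
        · exact h2 _ hF1 (Finset.mem_erase.mpr ⟨hxe, hx⟩)
    refine ⟨hXE, D₁, D₂.lcomp e, hE1, hE2, h1, hb', ?_⟩
    apply setSystem_ext'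
    · rfl
    ext H
    have f1 : H.erase e ∩ X = H ∩ X := by
      ext x
      simp only [Finset.mem_inter, Finset.mem_erase]
      constructor
      · tauto
      · rintro ⟨hx, hxX⟩; exact ⟨⟨fun h => heX (h ▸ hxX), hx⟩, hxX⟩
    have f2 : H.erase e \ X = (H \ X).erase e := by
      ext x; simp only [Finset.mem_sdiff, Finset.mem_erase]; tauto
    have f3 : e ∈ H ↔ e ∈ H \ X := by simp [heX]
    simp only [mem_lcomp, mem_dsum h1X h2', mem_dsum h1X hb, f1, f2]
    tauto

end MyAux

/-- Let `D = (E, 𝓕)` be a set system with `𝓕` nonempty, let `A ⊆ E` and let `X` be a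
separator of `D`. Then `X` is a separator of the twist `D*A` and of the loop
complementation `D+A`. -/
theorem separator_twist_lcomp {α : Type*} [DecidableEq α]
    (D : SetSystem α) (hne : D.Fs.Nonempty) (A : Finset α) (hA : A ⊆ D.E)
    (X : Finset α) (hX : D.IsSeparator X) :
    (D.twist A).IsSeparator X ∧ (D.lcompSet A).IsSeparator X := by
  classical
  constructor
  · -- twist
    obtain ⟨hXE, D₁, D₂, hE1, hE2, h1, h2, hD⟩ := hX
    subst hD
    have h1X : ∀ F ∈ D₁.Fs, F ⊆ X := fun F hF => hE1 ▸ h1 F hF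
    have h2' : ∀ F ∈ D₂.Fs, Disjoint F X := by
      intro F hF
      rw [Finset.disjoint_left]
      intro x hx
      have hh := h2 F hF hx
      rw [hE2] at hh
      exact (Finset.mem_sdiff.mp hh).2
    set DS := D₁.directSum D₂ with hDS
    have hb1 : ∀ F ∈ (D₁.twist (A ∩ X)).Fs, F ⊆ X := by
      rintro F ⟨G, hG, rfl⟩
      intro x hx
      rcases Finset.mem_symmDiff.mp hx with ⟨h, _⟩ | ⟨h, _⟩
      · exact h1X G hG h
      · exact (Finset.mem_inter.mp h).2
    have hb2 : ∀ F ∈ (D₂.twist (A \ X)).Fs, Disjoint F X := by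
      rintro F ⟨G, hG, rfl⟩
      rw [Finset.disjoint_left]
      intro x hx hxX
      rcases Finset.mem_symmDiff.mp hx with ⟨h, _⟩ | ⟨h, _⟩
      · exact Finset.disjoint_left.mp (h2' G hG) h hxX
      · exact (Finset.mem_sdiff.mp h).2 hxX
    have hb2' : ∀ F ∈ (D₂.twist (A \ X)).Fs, F ⊆ D₂.E := by
      rintro F ⟨G, hG, rfl⟩
      intro x hx
      rcases Finset.mem_symmDiff.mp hx with ⟨h, _⟩ | ⟨h, _⟩
      · exact h2 G hG h
      · rw [hE2]
        exact Finset.mem_sdiff.mpr ⟨hA (Finset.mem_sdiff.mp h).1, (Finset.mem_sdiff.mp h).2⟩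
    refine ⟨hXE, D₁.twist (A ∩ X), D₂.twist (A \ X), hE1, hE2, fun F hF => hE1 ▸ hb1 F hF,
      hb2', ?_⟩
    apply MyAux.setSystem_ext'
    · rfl
    ext H
    constructor
    · rintro ⟨G, hG, rfl⟩
      rw [MyAux.mem_dsum h1X h2'] at hG
      rw [MyAux.mem_dsum hb1 hb2]
      exact ⟨⟨G ∩ X, hG.1, MyAux.inter_symmDiff G A X⟩,
        ⟨G \ X, hG.2, MyAux.sdiff_symmDiff' G A X⟩⟩
    · intro hH
      rw [MyAux.mem_dsum hb1 hb2] at hH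
      obtain ⟨⟨G₁, hG₁, hH1⟩, ⟨G₂, hG₂, hH2⟩⟩ := hH
      refine ⟨G₁ ∪ G₂, ?_, ?_⟩
      · rw [MyAux.mem_dsum h1X h2']
        have e1 : (G₁ ∪ G₂) ∩ X = G₁ := by
          ext x
          simp only [Finset.mem_inter, Finset.mem_union]
          constructor
          · rintro ⟨h | h, hx⟩
            · exact h
            · exact absurd hx (Finset.disjoint_left.mp (h2' G₂ hG₂) h)
          · intro h; exact ⟨Or.inl h, h1X G₁ hG₁ h⟩
        have e2 : (G₁ ∪ G₂) \ X = G₂ := by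
          ext x
          simp only [Finset.mem_sdiff, Finset.mem_union]
          constructor
          · rintro ⟨h | h, hx⟩
            · exact absurd (h1X G₁ hG₁ h) hx
            · exact h
          · intro h; exact ⟨Or.inr h, Finset.disjoint_left.mp (h2' G₂ hG₂) h⟩
        rw [e1, e2]; exact ⟨hG₁, hG₂⟩
      · rw [MyAux.union_symmDiff_split G₁ G₂ A X (h1X G₁ hG₁) (h2' G₂ hG₂), ← hH1, ← hH2,
          MyAux.inter_union_sdiff'']
  · -- lcompSet
    have key : ∀ (l : List α) (D' : SetSystem α), (∀ e ∈ l, e ∈ D'.E) →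
        D'.IsSeparator X → (l.foldl SetSystem.lcomp D').IsSeparator X := by
      intro l
      induction l with
      | nil => intro D' _ h; exact h
      | cons a l ih =>
        intro D' hmem hsep
        simp only [List.foldl_cons]
        apply ih
        · intro e he'
          exact hmem e (List.mem_cons_of_mem _ he')
        · exact MyAux.lcomp_sep D' X hsep a (hmem a (List.mem_cons_self))
    exact key A.toList D (fun e he => hA (Finset.mem_toList.mp he)) hX
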